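/- Let X ⊆ ℝⁿ be a nonempty convex compact set with κ = max_{x∈X} ‖x‖₂ > 0, let C = cone({κ} × X) ⊆ ℝ^{1+n} with polar cone C° and metric projection π_C. Let ω_1, …, ω_T > 0 be positive weights with partial sums S_t = Σ_{τ=1}^t ω_τ, and let f_1, …, f_T ∈ ℝⁿ satisfy ‖f_t‖₂ ≤ L. Define the CBA⁺ iterates: x_1 ∈ X arbitrary; v_t = (⟨f_t, x_t⟩/κ, −f_t); u_1 = π_C(v_1); for t ≥ 1, x_{t+1} = (κ/ũ_t)·û_t if u_t = (ũ_t, û_t) ≠ 0 and x_{t+1} is an arbitrary point of X if u_t = 0; and u_{t+1} = π_C( (S_t·u_t + ω_{t+1}·v_{t+1}) / S_{t+1} ). Then the weighted regret satisfies Σ_{t=1}^T ω_t ⟨f_t, x_t⟩ − min_{x∈X} Σ_{t=1}^T ω_t ⟨f_t, x⟩ ≤ 2κL·√(Σ_{t=1}^T ω_t²). -/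

import Mathlib

open scoped RealInnerProductSpace
open Finset

noncomputable section

/-- `ℝ^{1+n}`, with its first coordinate a scalar block, as a Euclidean (L2) space. -/
abbrev Rone (n : ℕ) := WithLp 2 (ℝ × EuclideanSpace ℝ (Fin n))

/-- The conic hull `cone({κ} × X) = {α • (κ, x) : α ≥ 0, x ∈ X} ⊆ ℝ^{1+n}`. -/
def coneOf (n : ℕ) (κ : ℝ) (X : Set (EuclideanSpace ℝ (Fin n))) : Set (Rone n) :=
  {z | ∃ a : ℝ, 0 ≤ a ∧ ∃ x ∈ X, z = a • (WithLp.toLp 2 (κ, x) : Rone n)}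

/-- `p` is a nearest point to `u` in `C` (the metric projection of `u` onto `C`). -/
def IsProjOn {H : Type*} [NormedAddCommGroup H] (C : Set H) (u p : H) : Prop :=
  p ∈ C ∧ ∀ w ∈ C, ‖u - p‖ ≤ ‖u - w‖

/- ### Auxiliary lemmas -/

lemma smul_pair (n : ℕ) (c κ : ℝ) (y : EuclideanSpace ℝ (Fin n)) :
    c • (WithLp.toLp 2 (κ, y) : Rone n) = (WithLp.toLp 2 (c * κ, c • y) : Rone n) := rfl

lemma Rone_inner {n : ℕ} (z w : Rone n) : ⟪z, w⟫ = z.ofLp.1 * w.ofLp.1 + ⟪z.ofLp.2, w.ofLp.2⟫ := by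
  rw [WithLp.prod_inner_apply]
  simp [RCLike.inner_apply]
  exact mul_comm _ _

lemma Rone_norm_sq {n : ℕ} (z : Rone n) : ‖z‖ ^ 2 = z.ofLp.1 ^ 2 + ‖z.ofLp.2‖ ^ 2 := by
  rw [WithLp.prod_norm_sq_eq_of_L2]
  simp [Real.norm_eq_abs, sq_abs]

lemma coneOf_convex {n : ℕ} {κ : ℝ} {X : Set (EuclideanSpace ℝ (Fin n))}
    (hXne : X.Nonempty) (hXconv : Convex ℝ X) : Convex ℝ (coneOf n κ X) := by
  rintro z ⟨a, ha, xa, hxa, rfl⟩ w ⟨b, hb, xb, hxb, rfl⟩ s t hs ht hst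
  by_cases h : s * a + t * b = 0
  · obtain ⟨x0, hx0⟩ := hXne
    have hsa : s * a = 0 := by nlinarith [mul_nonneg hs ha, mul_nonneg ht hb]
    have htb : t * b = 0 := by linarith
    exact ⟨0, le_refl 0, x0, hx0, by
      rw [smul_smul, smul_smul, hsa, htb, zero_smul, zero_smul, zero_smul, add_zero]⟩
  · have hpos : 0 < s * a + t * b :=
      lt_of_le_of_ne (by positivity) (Ne.symm h)
    refine ⟨s * a + t * b, hpos.le,
      (s * a / (s * a + t * b)) • xa + (t * b / (s * a + t * b)) • xb,
      hXconv hxa hxb (by positivity) (by positivity) (by field_simp), ?_⟩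
    rw [smul_smul, smul_smul, smul_pair, smul_pair, smul_pair]
    have h1 : s * a * κ + t * b * κ = (s * a + t * b) * κ := by ring
    have h2 : (s * a) • xa + (t * b) • xb =
        (s * a + t * b) • ((s * a / (s * a + t * b)) • xa + (t * b / (s * a + t * b)) • xb) := by
      rw [smul_add, smul_smul, smul_smul]
      field_simp
    show (WithLp.toLp 2 (s * a * κ, (s * a) • xa) : Rone n) + (WithLp.toLp 2 (t * b * κ, (t * b) • xb) : Rone n) = _
    rw [show ((WithLp.toLp 2 (s * a * κ, (s * a) • xa) : Rone n) + (WithLp.toLp 2 (t * b * κ, (t * b) • xb) : Rone n))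
        = (WithLp.toLp 2 (s * a * κ + t * b * κ, (s * a) • xa + (t * b) • xb) : Rone n) from rfl, h1, h2]

lemma coneOf_zero_mem {n : ℕ} {κ : ℝ} {X : Set (EuclideanSpace ℝ (Fin n))}
    (hXne : X.Nonempty) : (0 : Rone n) ∈ coneOf n κ X := by
  obtain ⟨x0, hx0⟩ := hXne
  exact ⟨0, le_refl 0, x0, hx0, (zero_smul ℝ _).symm⟩

lemma coneOf_smul_mem {n : ℕ} {κ : ℝ} {X : Set (EuclideanSpace ℝ (Fin n))}
    {c : ℝ} (hc : 0 ≤ c) {z : Rone n} (hz : z ∈ coneOf n κ X) :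
    c • z ∈ coneOf n κ X := by
  obtain ⟨a, ha, y, hy, rfl⟩ := hz
  exact ⟨c * a, mul_nonneg hc ha, y, hy, smul_smul c a _⟩

lemma proj_facts {H : Type*} [NormedAddCommGroup H] [InnerProductSpace ℝ H]
    {C : Set H} (hC : Convex ℝ C) (h0 : (0 : H) ∈ C)
    (hsmul : ∀ c : ℝ, 0 ≤ c → ∀ z ∈ C, c • z ∈ C)
    {v p : H} (hp : IsProjOn C v p) :
    (∀ w ∈ C, ⟪v - p, w⟫ ≤ 0) ∧ ‖p‖ ≤ ‖v‖ := by
  have hvar : ∀ w ∈ C, ⟪v - p, w - p⟫ ≤ 0 := by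
    have heq : ‖v - p‖ = ⨅ w : C, ‖v - w‖ := by
      haveI : Nonempty C := ⟨⟨p, hp.1⟩⟩
      refine le_antisymm (le_ciInf fun w => hp.2 w w.2)
        (ciInf_le ⟨0, ?_⟩ (⟨p, hp.1⟩ : C))
      rintro _ ⟨w, rfl⟩; exact norm_nonneg _
    exact (norm_eq_iInf_iff_real_inner_le_zero hC hp.1).1 heq
  have h2p : ⟪v - p, p⟫ ≤ 0 := by
    have := hvar ((2 : ℝ) • p) (hsmul 2 (by norm_num) p hp.1)
    have h2 : (2 : ℝ) • p - p = p := by rw [two_smul]; abel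
    rwa [h2] at this
  have h0p : 0 ≤ ⟪v - p, p⟫ := by
    have := hvar 0 h0
    rw [zero_sub, inner_neg_right] at this
    linarith
  have horth : ⟪v - p, p⟫ = 0 := le_antisymm h2p h0p
  constructor
  · intro w hw
    have := hvar w hw
    rw [inner_sub_right] at this
    linarith
  · have h1 : ‖p‖ ^ 2 ≤ ‖v‖ * ‖p‖ := by
      have hvp : ⟪v, p⟫ = ‖p‖ ^ 2 := by
        have h := inner_sub_left (𝕜 := ℝ) v p p
        rw [horth] at h
        rw [← real_inner_self_eq_norm_sq]
        linarith
      calc ‖p‖ ^ 2 = ⟪v, p⟫ := hvp.symm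
        _ ≤ ‖v‖ * ‖p‖ := real_inner_le_norm v p
    nlinarith [norm_nonneg p, norm_nonneg v]


lemma proj_scaled_inner {H : Type*} [NormedAddCommGroup H] [InnerProductSpace ℝ H]
    {C : Set H} (hC : Convex ℝ C) (h0 : (0 : H) ∈ C)
    (hsmul : ∀ c : ℝ, 0 ≤ c → ∀ z ∈ C, c • z ∈ C)
    {c : ℝ} (hc : 0 < c) {y p : H} (hp : IsProjOn C (c⁻¹ • y) p)
    {z : H} (hz : z ∈ C) : ⟪z, y⟫ ≤ c * ⟪z, p⟫ := by
  have h := (proj_facts hC h0 hsmul hp).1 z hz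
  rw [inner_sub_left, real_inner_smul_left] at h
  have h2 : ⟪y, z⟫ ≤ c * ⟪p, z⟫ := by
    have h3 := mul_le_mul_of_nonneg_left h hc.le
    rw [mul_sub, mul_zero, ← mul_assoc, mul_inv_cancel₀ (ne_of_gt hc), one_mul] at h3
    linarith
  have c1 := real_inner_comm z y
  have c2 := real_inner_comm z p
  nlinarith [h2, c1, c2, hc]

lemma proj_scaled_norm {H : Type*} [NormedAddCommGroup H] [InnerProductSpace ℝ H]
    {C : Set H} (hC : Convex ℝ C) (h0 : (0 : H) ∈ C)
    (hsmul : ∀ c : ℝ, 0 ≤ c → ∀ z ∈ C, c • z ∈ C)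
    {c : ℝ} (hc : 0 < c) {y p : H} (hp : IsProjOn C (c⁻¹ • y) p) :
    c ^ 2 * ‖p‖ ^ 2 ≤ ‖y‖ ^ 2 := by
  have h := (proj_facts hC h0 hsmul hp).2
  rw [norm_smul, Real.norm_eq_abs, abs_of_pos (inv_pos.2 hc)] at h
  have h2 : c * ‖p‖ ≤ ‖y‖ := by
    have h3 := mul_le_mul_of_nonneg_left h hc.le
    rw [← mul_assoc, mul_inv_cancel₀ (ne_of_gt hc), one_mul] at h3
    exact h3
  nlinarith [norm_nonneg p, norm_nonneg y, mul_nonneg hc.le (norm_nonneg p)]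

/-- Theorem A.3 of the paper: CBA⁺ with weights `ω` on both decisions and
payoffs: the `ω`-weighted regret is at most `2κL·√(Σ_t ω_t²)`.  Sequences are indexed from
`0`, so index `t ∈ {0, …, T−1}` is round `t+1`; the recursion
`u_{t+1} = π_C((S_t·u_t + ω_{t+1}·v_{t+1})/S_{t+1})` (1-based, `S_t = Σ_{τ≤t} ω_τ`) becomes
the 0-based recursion below. -/
theorem cbaPlus_weighted_regret (n T : ℕ) (hT : 1 ≤ T)
    (X : Set (EuclideanSpace ℝ (Fin n)))
    (hXne : X.Nonempty) (hXconv : Convex ℝ X) (hXcomp : IsCompact X)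
    (κ L : ℝ) (hκ : IsGreatest ((fun x => ‖x‖) '' X) κ) (hκpos : 0 < κ)
    (ω : ℕ → ℝ) (hω : ∀ t < T, 0 < ω t)
    (f x : ℕ → EuclideanSpace ℝ (Fin n))
    (hL : ∀ t < T, ‖f t‖ ≤ L)
    (hxmem : ∀ t < T, x t ∈ X)
    (v u : ℕ → Rone n)
    (hv : ∀ t < T, v t = (WithLp.toLp 2 (⟪f t, x t⟫ / κ, -f t) : Rone n))
    (hu0 : IsProjOn (coneOf n κ X) (v 0) (u 0))
    (hurec : ∀ t : ℕ, t + 1 < T →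
      IsProjOn (coneOf n κ X)
        ((∑ j ∈ Finset.range (t + 2), ω j)⁻¹ •
          ((∑ j ∈ Finset.range (t + 1), ω j) • u t + ω (t + 1) • v (t + 1)))
        (u (t + 1)))
    (hxplay : ∀ t : ℕ, t + 1 < T → u t ≠ 0 →
      x (t + 1) = (κ / (u t).ofLp.1) • (u t).ofLp.2) :
    (∑ t ∈ Finset.range T, ω t * ⟪f t, x t⟫)
        - sInf ((fun z => ∑ t ∈ Finset.range T, ω t * ⟪f t, z⟫) '' X)
      ≤ 2 * κ * L * Real.sqrt (∑ t ∈ Finset.range T, ω t ^ 2) := by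
  have hCconv : Convex ℝ (coneOf n κ X) := coneOf_convex hXne hXconv
  have hC0 : (0 : Rone n) ∈ coneOf n κ X := coneOf_zero_mem hXne
  have hCsmul : ∀ c : ℝ, 0 ≤ c → ∀ z ∈ coneOf n κ X, c • z ∈ coneOf n κ X :=
    fun c hc z hz => coneOf_smul_mem hc hz
  have hκ' : ∀ y ∈ X, ‖y‖ ≤ κ := fun y hy => hκ.2 (Set.mem_image_of_mem _ hy)
  have hLnn : 0 ≤ L := le_trans (norm_nonneg (f 0)) (hL 0 hT)
  have hv1 : ∀ t < T, (v t).ofLp.1 = ⟪f t, x t⟫ / κ := fun t ht => by rw [hv t ht]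
  have hv2 : ∀ t < T, (v t).ofLp.2 = -f t := fun t ht => by rw [hv t ht]
  -- bound on ‖v t‖²
  have hvnorm : ∀ t < T, ‖v t‖ ^ 2 ≤ 2 * L ^ 2 := by
    intro t ht
    rw [Rone_norm_sq, hv1 t ht, hv2 t ht]
    have h1 : |⟪f t, x t⟫| ≤ L * κ :=
      le_trans (abs_real_inner_le_norm _ _)
        (mul_le_mul (hL t ht) (hκ' _ (hxmem t ht)) (norm_nonneg _) hLnn)
    have h2 : (⟪f t, x t⟫ / κ) ^ 2 ≤ L ^ 2 := by
      rw [div_pow, div_le_iff₀ (by positivity)]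
      nlinarith [abs_nonneg ⟪f t, x t⟫, sq_abs ⟪f t, x t⟫]
    have h3 : ‖(-f t : EuclideanSpace ℝ (Fin n))‖ ^ 2 ≤ L ^ 2 := by
      rw [norm_neg]
      nlinarith [norm_nonneg (f t), hL t ht]
    linarith
  -- forceability
  have horth : ∀ t, t + 1 < T → u t ∈ coneOf n κ X → ⟪u t, v (t + 1)⟫ = 0 := by
    intro t ht hmem
    by_cases h0 : u t = 0
    · rw [h0, inner_zero_left]
    · obtain ⟨a, ha, y, hy, hay⟩ := hmem
      have hane : a ≠ 0 := fun h => h0 (by rw [hay, h, zero_smul])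
      have hu1 : (u t).ofLp.1 = a * κ := by rw [hay]; rfl
      have hu2 : (u t).ofLp.2 = a • y := by rw [hay]; rfl
      have hx' : x (t + 1) = y := by
        rw [hxplay t ht h0, hu1, hu2, smul_smul,
          show κ / (a * κ) * a = 1 by
            rw [div_mul_eq_mul_div, div_eq_one_iff_eq (mul_ne_zero hane hκpos.ne')]; ring]
        exact one_smul ℝ y
      rw [Rone_inner, hu1, hu2, hv1 (t + 1) ht, hv2 (t + 1) ht, hx',
        real_inner_smul_left, inner_neg_right, real_inner_comm y (f (t + 1))]
      field_simp
      ring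
  -- projections move z-inner products up
  have hproj_le : ∀ {w p : Rone n}, IsProjOn (coneOf n κ X) w p →
      ∀ z ∈ coneOf n κ X, ⟪z, w⟫ ≤ ⟪z, p⟫ := by
    intro w p hp z hz
    have h := (proj_facts hCconv hC0 hCsmul hp).1 z hz
    rw [inner_sub_left] at h
    have hcomm1 := real_inner_comm w z
    have hcomm2 := real_inner_comm p z
    linarith
  -- main induction
  have key : ∀ t, t < T → u t ∈ coneOf n κ X ∧
      (∀ z ∈ coneOf n κ X, (∑ j ∈ Finset.range (t + 1), ω j * ⟪z, v j⟫)
          ≤ (∑ j ∈ Finset.range (t + 1), ω j) * ⟪z, u t⟫) ∧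
      (∑ j ∈ Finset.range (t + 1), ω j) ^ 2 * ‖u t‖ ^ 2
          ≤ ∑ j ∈ Finset.range (t + 1), ω j ^ 2 * ‖v j‖ ^ 2 := by
    intro t
    induction t with
    | zero =>
      intro h0T
      have hfact := proj_facts hCconv hC0 hCsmul hu0
      refine ⟨hu0.1, ?_, ?_⟩
      · intro z hz
        simp only [zero_add, Finset.range_one, Finset.sum_singleton]
        exact mul_le_mul_of_nonneg_left (hproj_le hu0 z hz) (hω 0 h0T).le
      · simp only [zero_add, Finset.range_one, Finset.sum_singleton]
        have h : ‖u 0‖ ^ 2 ≤ ‖v 0‖ ^ 2 := by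
          nlinarith [hfact.2, norm_nonneg (u 0), norm_nonneg (v 0)]
        exact mul_le_mul_of_nonneg_left h (sq_nonneg _)
    | succ t IH =>
      intro hT'
      have htT : t < T := Nat.lt_of_succ_lt hT'
      obtain ⟨humem, hsum, hnorm⟩ := IH htT
      have hSpos : 0 < ∑ j ∈ Finset.range (t + 1), ω j := Finset.sum_pos
        (fun j hj => hω j (lt_of_le_of_lt (Nat.lt_succ_iff.1 (Finset.mem_range.1 hj)) htT))
        Finset.nonempty_range_add_one
      have hproj := hurec t hT'
      have e2 : (t + 2) = (t + 1) + 1 := rfl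
      rw [e2] at hproj
      have hS'pos : 0 < ∑ j ∈ Finset.range (t + 1 + 1), ω j := Finset.sum_pos
        (fun j hj => hω j (lt_of_le_of_lt (Nat.lt_succ_iff.1 (Finset.mem_range.1 hj)) hT'))
        Finset.nonempty_range_add_one
      have horth' : ⟪u t, v (t + 1)⟫ = 0 := horth t hT' humem
      refine ⟨hproj.1, ?_, ?_⟩
      · intro z hz
        have h2 : ⟪z, (∑ j ∈ Finset.range (t + 1), ω j) • u t + ω (t + 1) • v (t + 1)⟫
            ≤ (∑ j ∈ Finset.range (t + 1 + 1), ω j) * ⟪z, u (t + 1)⟫ :=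
          proj_scaled_inner hCconv hC0 hCsmul hS'pos hproj hz
        have h3 : ⟪z, (∑ j ∈ Finset.range (t + 1), ω j) • u t + ω (t + 1) • v (t + 1)⟫
            = (∑ j ∈ Finset.range (t + 1), ω j) * ⟪z, u t⟫ + ω (t + 1) * ⟪z, v (t + 1)⟫ := by
          rw [inner_add_right, real_inner_smul_right, real_inner_smul_right]
        have h4 := hsum z hz
        have h5 : ∑ j ∈ Finset.range (t + 1 + 1), ω j
            = (∑ j ∈ Finset.range (t + 1), ω j) + ω (t + 1) :=
          Finset.sum_range_succ _ _
        rw [Finset.sum_range_succ (f := fun j => ω j * ⟪z, v j⟫) (n := t + 1), h5]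
        rw [h5] at h2
        nlinarith [h2, h3, h4]
      · have h6 : (∑ j ∈ Finset.range (t + 1 + 1), ω j) ^ 2 * ‖u (t + 1)‖ ^ 2
            ≤ ‖(∑ j ∈ Finset.range (t + 1), ω j) • u t + ω (t + 1) • v (t + 1)‖ ^ 2 :=
          proj_scaled_norm hCconv hC0 hCsmul hS'pos hproj
        have h8 : ‖(∑ j ∈ Finset.range (t + 1), ω j) • u t + ω (t + 1) • v (t + 1)‖ ^ 2
            = (∑ j ∈ Finset.range (t + 1), ω j) ^ 2 * ‖u t‖ ^ 2
              + ω (t + 1) ^ 2 * ‖v (t + 1)‖ ^ 2 := by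
          rw [norm_add_sq_real, real_inner_smul_left, real_inner_smul_right, horth',
            norm_smul, norm_smul, Real.norm_eq_abs, Real.norm_eq_abs, mul_pow, mul_pow,
            sq_abs, sq_abs]
          ring
        rw [Finset.sum_range_succ (f := fun j => ω j ^ 2 * ‖v j‖ ^ 2) (n := t + 1)]
        linarith [h6, h8, hnorm]
  -- conclude
  obtain ⟨t0, rfl⟩ : ∃ t0, T = t0 + 1 := ⟨T - 1, (Nat.succ_pred_eq_of_pos hT).symm⟩
  obtain ⟨humem, hsum, hnorm⟩ := key t0 (Nat.lt_succ_self t0)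
  have hSpos : 0 < ∑ j ∈ Finset.range (t0 + 1), ω j := Finset.sum_pos
    (fun j hj => hω j (Finset.mem_range.1 hj)) Finset.nonempty_range_add_one
  have hSig : 0 ≤ ∑ t ∈ Finset.range (t0 + 1), ω t ^ 2 :=
    Finset.sum_nonneg fun _ _ => sq_nonneg _
  have hbound : (∑ j ∈ Finset.range (t0 + 1), ω j) ^ 2 * ‖u t0‖ ^ 2
      ≤ 2 * L ^ 2 * ∑ t ∈ Finset.range (t0 + 1), ω t ^ 2 := by
    refine le_trans hnorm ?_
    calc ∑ j ∈ Finset.range (t0 + 1), ω j ^ 2 * ‖v j‖ ^ 2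
        ≤ ∑ j ∈ Finset.range (t0 + 1), ω j ^ 2 * (2 * L ^ 2) :=
          Finset.sum_le_sum fun j hj =>
            mul_le_mul_of_nonneg_left (hvnorm j (Finset.mem_range.1 hj)) (sq_nonneg _)
      _ = 2 * L ^ 2 * ∑ t ∈ Finset.range (t0 + 1), ω t ^ 2 := by
          rw [← Finset.sum_mul, mul_comm]
  have hper : ∀ y ∈ X,
      (∑ t ∈ Finset.range (t0 + 1), ω t * ⟪f t, x t⟫)
          - (∑ t ∈ Finset.range (t0 + 1), ω t * ⟪f t, y⟫)
        ≤ 2 * κ * L * Real.sqrt (∑ t ∈ Finset.range (t0 + 1), ω t ^ 2) := by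
    intro y hy
    set z : Rone n := (WithLp.toLp 2 (κ, y) : Rone n) with hzdef
    have hz1 : z.ofLp.1 = κ := rfl
    have hz2 : z.ofLp.2 = y := rfl
    have hzmem : z ∈ coneOf n κ X := ⟨1, zero_le_one, y, hy, (one_smul ℝ _).symm⟩
    have hzv : ∀ t < t0 + 1, ⟪z, v t⟫ = ⟪f t, x t⟫ - ⟪f t, y⟫ := by
      intro t ht
      rw [Rone_inner, hz1, hz2, hv1 t ht, hv2 t ht, inner_neg_right,
        real_inner_comm y (f t)]
      field_simp
      ring
    have h1 : (∑ t ∈ Finset.range (t0 + 1), ω t * ⟪f t, x t⟫)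
        - (∑ t ∈ Finset.range (t0 + 1), ω t * ⟪f t, y⟫)
        = ∑ t ∈ Finset.range (t0 + 1), ω t * ⟪z, v t⟫ := by
      rw [← Finset.sum_sub_distrib]
      refine Finset.sum_congr rfl fun t ht => ?_
      rw [hzv t (Finset.mem_range.1 ht)]; ring
    rw [h1]
    have h2 := hsum z hzmem
    have h3 : ⟪z, u t0⟫ ≤ ‖z‖ * ‖u t0‖ := real_inner_le_norm z (u t0)
    have hznorm : ‖z‖ ^ 2 ≤ 2 * κ ^ 2 := by
      rw [Rone_norm_sq, hz1, hz2]
      nlinarith [hκ' y hy, norm_nonneg y]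
    set R := Real.sqrt (∑ t ∈ Finset.range (t0 + 1), ω t ^ 2) with hR
    have hR2 : R ^ 2 = ∑ t ∈ Finset.range (t0 + 1), ω t ^ 2 := Real.sq_sqrt hSig
    have hRnn : 0 ≤ R := Real.sqrt_nonneg _
    set S := ∑ j ∈ Finset.range (t0 + 1), ω j with hSdef
    have hfin : S * (‖z‖ * ‖u t0‖) ≤ 2 * κ * L * R := by
      have hsq : (S * (‖z‖ * ‖u t0‖)) ^ 2 ≤ (2 * κ * L * R) ^ 2 := by
        have e1 : (S * (‖z‖ * ‖u t0‖)) ^ 2 = ‖z‖ ^ 2 * (S ^ 2 * ‖u t0‖ ^ 2) := by ring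
        have e2 : (2 * κ * L * R) ^ 2 = (2 * κ ^ 2) * (2 * L ^ 2 * R ^ 2) := by ring
        rw [e1, e2, hR2]
        exact mul_le_mul hznorm hbound (by positivity) (by positivity)
      have hA : 0 ≤ S * (‖z‖ * ‖u t0‖) := by positivity
      have hB : 0 ≤ 2 * κ * L * R := by positivity
      have := Real.sqrt_le_sqrt hsq
      rwa [Real.sqrt_sq hA, Real.sqrt_sq hB] at this
    calc ∑ t ∈ Finset.range (t0 + 1), ω t * ⟪z, v t⟫
        ≤ S * ⟪z, u t0⟫ := h2
      _ ≤ S * (‖z‖ * ‖u t0‖) := mul_le_mul_of_nonneg_left h3 hSpos.le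
      _ ≤ 2 * κ * L * R := hfin
  have hinf : (∑ t ∈ Finset.range (t0 + 1), ω t * ⟪f t, x t⟫)
      - 2 * κ * L * Real.sqrt (∑ t ∈ Finset.range (t0 + 1), ω t ^ 2)
      ≤ sInf ((fun z => ∑ t ∈ Finset.range (t0 + 1), ω t * ⟪f t, z⟫) '' X) := by
    refine le_csInf (hXne.image _) ?_
    rintro b ⟨y, hy, rfl⟩
    have := hper y hy
    linarith
  linarith
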